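/- Let C = (C, ⊗, I) be a monoidal category admitting an initial object 0 and a coproduct I + I of the unit object with itself, and suppose both of these colimits are preserved by each functor A ⊗ (−). If C is semi-additive, then the object 0 has a right dual (indeed 0 is right dual to itself) and the object I + I has a right dual (indeed I + I is right dual to itself). -/

import Mathlib

open CategoryTheory CategoryTheory.Limits CategoryTheory.MonoidalCategory

universe v u

/-- `Y` is a right dual of `X`, witnessed by `η : 𝟙_ C ⟶ Y ⊗ X`, when every morphism
`f : A ⟶ B ⊗ X` factors as `(g ▷ X) ∘ (A ◁ η)` (modulo unitor and associator) for a
unique `g : A ⊗ Y ⟶ B`. -/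
def IsRightDual {C : Type u} [Category.{v} C] [MonoidalCategory C]
    (X Y : C) (η : 𝟙_ C ⟶ Y ⊗ X) : Prop :=
  ∀ (A B : C) (f : A ⟶ B ⊗ X), ∃! g : A ⊗ Y ⟶ B,
    f = (ρ_ A).inv ≫ (A ◁ η) ≫ (α_ A Y X).inv ≫ (g ▷ X)

/-- `Y` is a left dual of `X`, witnessed by `η : 𝟙_ C ⟶ X ⊗ Y`, when every morphism
`f : A ⟶ X ⊗ B` factors as `(X ◁ g) ∘ (η ▷ A)` (modulo unitor and associator) for a
unique `g : Y ⊗ A ⟶ B`. -/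
def IsLeftDual {C : Type u} [Category.{v} C] [MonoidalCategory C]
    (X Y : C) (η : 𝟙_ C ⟶ X ⊗ Y) : Prop :=
  ∀ (A B : C) (f : A ⟶ X ⊗ B), ∃! g : Y ⊗ A ⟶ B,
    f = (λ_ A).inv ≫ (η ▷ A) ≫ (α_ X Y A).hom ≫ (X ◁ g)

/-- A semi-additive structure on a category `C`: a commutative monoid structure on each
hom-set, preserved by composition on either side (composition is bilinear). -/
structure SemiAdditive (C : Type u) [Category.{v} C] where
  add : ∀ {A B : C}, (A ⟶ B) → (A ⟶ B) → (A ⟶ B)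
  zero : ∀ {A B : C}, A ⟶ B
  add_assoc : ∀ {A B : C} (f g h : A ⟶ B), add (add f g) h = add f (add g h)
  add_comm : ∀ {A B : C} (f g : A ⟶ B), add f g = add g f
  zero_add : ∀ {A B : C} (f : A ⟶ B), add zero f = f
  comp_add : ∀ {A B D : C} (f : A ⟶ B) (g h : B ⟶ D), f ≫ add g h = add (f ≫ g) (f ≫ h)
  add_comp : ∀ {A B D : C} (f g : A ⟶ B) (h : B ⟶ D), add f g ≫ h = add (f ≫ h) (g ≫ h)
  comp_zero : ∀ {A B D : C} (f : A ⟶ B), f ≫ (zero : B ⟶ D) = (zero : A ⟶ D)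
  zero_comp : ∀ {A B D : C} (f : B ⟶ D), (zero : A ⟶ B) ≫ f = (zero : A ⟶ D)

/-- Let `C` be a monoidal category with an initial object `O` and a coproduct
`J = 𝟙_C + 𝟙_C` of the unit with itself, both preserved by each functor `A ⊗ (−)`.
If `C` is semi-additive, then `O` is right dual to itself and `J` is right dual to
itself. -/
theorem selfDual_of_semiAdditive {C : Type u} [Category.{v} C] [MonoidalCategory C]
    (S : SemiAdditive C)
    (O : C) (hO : IsInitial O)
    (J : C) (j₁ j₂ : 𝟙_ C ⟶ J) (hJ : IsColimit (BinaryCofan.mk j₁ j₂))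
    (hpO : ∀ A : C, IsInitial (A ⊗ O))
    (hpJ : ∀ A : C, IsColimit (BinaryCofan.mk (A ◁ j₁) (A ◁ j₂))) :
    (∃ η : 𝟙_ C ⟶ O ⊗ O, IsRightDual O O η) ∧
    (∃ η : 𝟙_ C ⟶ J ⊗ J, IsRightDual J J η) := by
  classical
  -- every morphism into an initial object is the zero morphism
  have zinit : ∀ (T : C), IsInitial T → ∀ (A : C) (u : A ⟶ T), u = S.zero := by
    intro T hT A u
    have hid : 𝟙 T = (S.zero : T ⟶ T) := hT.hom_ext _ _
    calc u = u ≫ 𝟙 T := (Category.comp_id u).symm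
      _ = u ≫ S.zero := by rw [hid]
      _ = S.zero := S.comp_zero u
  -- whiskering preserves zero morphisms
  have wzero : ∀ (B X Y : C), (B ◁ (S.zero : X ⟶ Y)) = (S.zero : B ⊗ X ⟶ B ⊗ Y) := by
    intro B X Y
    have h1 : (S.zero : X ⟶ Y) = (S.zero : X ⟶ O) ≫ hO.to Y := (S.zero_comp _).symm
    rw [h1, MonoidalCategory.whiskerLeft_comp]
    rw [zinit _ (hpO B) _ (B ◁ (S.zero : X ⟶ O)), S.zero_comp]
  have addzero : ∀ {A B : C} (f : A ⟶ B), S.add f S.zero = f := by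
    intro A B f; rw [S.add_comm, S.zero_add]
  constructor
  · -- the initial object is self-dual
    refine ⟨S.zero, ?_⟩
    intro A B f
    refine ⟨(hpO A).to B, ?_, ?_⟩
    · exact (zinit _ (hpO B) _ f).trans (zinit _ (hpO B) _ _).symm
    · intro g _; exact (hpO A).hom_ext g _
  · -- J = 𝟙 ⊕ 𝟙 is self-dual
    set p₁ : J ⟶ 𝟙_ C := hJ.desc (BinaryCofan.mk (𝟙 _) S.zero) with hp₁
    set p₂ : J ⟶ 𝟙_ C := hJ.desc (BinaryCofan.mk S.zero (𝟙 _)) with hp₂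
    have j₁p₁ : j₁ ≫ p₁ = 𝟙 _ := by
      exact hJ.fac (BinaryCofan.mk (𝟙 _) S.zero) ⟨WalkingPair.left⟩
    have j₂p₁ : j₂ ≫ p₁ = S.zero := by
      exact hJ.fac (BinaryCofan.mk (𝟙 _) S.zero) ⟨WalkingPair.right⟩
    have j₁p₂ : j₁ ≫ p₂ = S.zero := by
      exact hJ.fac (BinaryCofan.mk S.zero (𝟙 _)) ⟨WalkingPair.left⟩
    have j₂p₂ : j₂ ≫ p₂ = 𝟙 _ := by
      exact hJ.fac (BinaryCofan.mk S.zero (𝟙 _)) ⟨WalkingPair.right⟩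
    set η : 𝟙_ C ⟶ J ⊗ J :=
      S.add ((λ_ (𝟙_ C)).inv ≫ (j₁ ⊗ₘ j₁)) ((λ_ (𝟙_ C)).inv ≫ (j₂ ⊗ₘ j₂)) with hη
    -- key computation for η composed with projections
    have ηp : ∀ (jk : 𝟙_ C ⟶ J) (pk : J ⟶ 𝟙_ C),
        jk ≫ pk = 𝟙 _ → ((jk = j₁ ∧ j₂ ≫ pk = S.zero) ∨ (jk = j₂ ∧ j₁ ≫ pk = S.zero)) →
        η ≫ (J ◁ pk) = (λ_ (𝟙_ C)).inv ≫ (jk ▷ 𝟙_ C) := by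
      intro jk pk hkk hoth
      have tm : ∀ (m : 𝟙_ C ⟶ J), (m ⊗ₘ m) ≫ (J ◁ pk) = (m ▷ 𝟙_ C) ≫ (J ◁ (m ≫ pk)) := by
        intro m
        rw [MonoidalCategory.tensorHom_def, Category.assoc, ← MonoidalCategory.whiskerLeft_comp]
      have hz : ∀ (m : 𝟙_ C ⟶ J), m ≫ pk = S.zero →
          ((λ_ (𝟙_ C)).inv ≫ (m ⊗ₘ m)) ≫ (J ◁ pk) = S.zero := by
        intro m hm
        rw [Category.assoc, tm m, hm, wzero, S.comp_zero, S.comp_zero]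
      have hk : ((λ_ (𝟙_ C)).inv ≫ (jk ⊗ₘ jk)) ≫ (J ◁ pk)
          = (λ_ (𝟙_ C)).inv ≫ (jk ▷ 𝟙_ C) := by
        rw [Category.assoc, tm jk, hkk, MonoidalCategory.whiskerLeft_id, Category.comp_id]
      rcases hoth with ⟨h1, h2⟩ | ⟨h1, h2⟩
      · rw [hη, S.add_comp, ← h1, hk, hz j₂ h2, addzero]
      · rw [hη, S.add_comp, ← h1, hk, hz j₁ h2, S.add_comm, addzero]
    have ηp₁ : η ≫ (J ◁ p₁) = (λ_ (𝟙_ C)).inv ≫ (j₁ ▷ 𝟙_ C) :=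
      ηp j₁ p₁ j₁p₁ (Or.inl ⟨rfl, j₂p₁⟩)
    have ηp₂ : η ≫ (J ◁ p₂) = (λ_ (𝟙_ C)).inv ≫ (j₂ ▷ 𝟙_ C) :=
      ηp j₂ p₂ j₂p₂ (Or.inr ⟨rfl, j₁p₂⟩)
    -- whiskered projection relations
    have w11 : ∀ (B : C), (B ◁ j₁) ≫ (B ◁ p₁) = 𝟙 _ := by
      intro B; rw [← MonoidalCategory.whiskerLeft_comp, j₁p₁, MonoidalCategory.whiskerLeft_id]
    have w22 : ∀ (B : C), (B ◁ j₂) ≫ (B ◁ p₂) = 𝟙 _ := by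
      intro B; rw [← MonoidalCategory.whiskerLeft_comp, j₂p₂, MonoidalCategory.whiskerLeft_id]
    have w12 : ∀ (B : C), (B ◁ j₁) ≫ (B ◁ p₂) = S.zero := by
      intro B; rw [← MonoidalCategory.whiskerLeft_comp, j₁p₂, wzero]
    have w21 : ∀ (B : C), (B ◁ j₂) ≫ (B ◁ p₁) = S.zero := by
      intro B; rw [← MonoidalCategory.whiskerLeft_comp, j₂p₁, wzero]
    -- identity reconstruction on B ⊗ J
    have idrec : ∀ (B : C), 𝟙 (B ⊗ J)
        = S.add ((B ◁ p₁) ≫ (B ◁ j₁)) ((B ◁ p₂) ≫ (B ◁ j₂)) := by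
      intro B
      refine BinaryCofan.IsColimit.hom_ext (hpJ B) ?_ ?_ <;>
        simp only [BinaryCofan.mk_inl, BinaryCofan.mk_inr, Category.comp_id, S.comp_add,
          ← Category.assoc]
      · show B ◁ j₁ ≫ 𝟙 (B ⊗ J) = B ◁ j₁ ≫ S.add (B ◁ p₁ ≫ B ◁ j₁) (B ◁ p₂ ≫ B ◁ j₂)
        rw [Category.comp_id, S.comp_add, ← Category.assoc, ← Category.assoc, w11 B, w12 B,
          S.zero_comp, Category.id_comp, addzero]
      · show B ◁ j₂ ≫ 𝟙 (B ⊗ J) = B ◁ j₂ ≫ S.add (B ◁ p₁ ≫ B ◁ j₁) (B ◁ p₂ ≫ B ◁ j₂)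
        rw [Category.comp_id, S.comp_add, ← Category.assoc, ← Category.assoc, w21 B, w22 B,
          S.zero_comp, Category.id_comp, S.zero_add]
    -- maps into B ⊗ J are determined by the two projections
    have extJ : ∀ (A B : C) (u v : A ⟶ B ⊗ J),
        u ≫ (B ◁ p₁) = v ≫ (B ◁ p₁) → u ≫ (B ◁ p₂) = v ≫ (B ◁ p₂) → u = v := by
      intro A B u v h1 h2
      calc u = u ≫ 𝟙 (B ⊗ J) := (Category.comp_id u).symm
        _ = S.add (u ≫ (B ◁ p₁) ≫ (B ◁ j₁)) (u ≫ (B ◁ p₂) ≫ (B ◁ j₂)) := by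
            rw [idrec B, S.comp_add]
        _ = S.add (v ≫ (B ◁ p₁) ≫ (B ◁ j₁)) (v ≫ (B ◁ p₂) ≫ (B ◁ j₂)) := by
            rw [← Category.assoc, ← Category.assoc, h1, h2, Category.assoc, Category.assoc]
        _ = v ≫ 𝟙 (B ⊗ J) := by rw [idrec B, S.comp_add]
        _ = v := Category.comp_id v
    -- the key computation
    have keyA : ∀ (A B : C) (g : A ⊗ J ⟶ B) (jk : 𝟙_ C ⟶ J) (pk : J ⟶ 𝟙_ C),
        η ≫ (J ◁ pk) = (λ_ (𝟙_ C)).inv ≫ (jk ▷ 𝟙_ C) →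
        ((ρ_ A).inv ≫ (A ◁ η) ≫ (α_ A J J).inv ≫ (g ▷ J)) ≫ (B ◁ pk)
          = (ρ_ A).inv ≫ (A ◁ jk) ≫ g ≫ (ρ_ B).inv := by
      intro A B g jk pk hpk
      calc ((ρ_ A).inv ≫ (A ◁ η) ≫ (α_ A J J).inv ≫ (g ▷ J)) ≫ (B ◁ pk)
          = (ρ_ A).inv ≫ (A ◁ η) ≫ (α_ A J J).inv ≫ ((A ⊗ J) ◁ pk) ≫ (g ▷ 𝟙_ C) := by
            simp only [Category.assoc, ← whisker_exchange]
        _ = (ρ_ A).inv ≫ (A ◁ η) ≫ (A ◁ (J ◁ pk)) ≫ (α_ A J (𝟙_ C)).inv ≫ (g ▷ 𝟙_ C) := by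
            rw [associator_inv_naturality_right_assoc]
        _ = (ρ_ A).inv ≫ (A ◁ ((λ_ (𝟙_ C)).inv ≫ (jk ▷ 𝟙_ C)))
              ≫ (α_ A J (𝟙_ C)).inv ≫ (g ▷ 𝟙_ C) := by
            rw [← MonoidalCategory.whiskerLeft_comp_assoc, hpk]
        _ = (ρ_ A).inv ≫ (A ◁ (λ_ (𝟙_ C)).inv) ≫ (α_ A (𝟙_ C) (𝟙_ C)).inv
              ≫ ((A ◁ jk) ▷ 𝟙_ C) ≫ (g ▷ 𝟙_ C) := by
            rw [MonoidalCategory.whiskerLeft_comp, Category.assoc,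
              associator_inv_naturality_middle_assoc]
        _ = (ρ_ A).inv ≫ ((ρ_ A).inv ▷ 𝟙_ C) ≫ ((A ◁ jk) ▷ 𝟙_ C) ≫ (g ▷ 𝟙_ C) := by
            have : (ρ_ A).inv ≫ A ◁ (λ_ (𝟙_ C)).inv ≫ (α_ A (𝟙_ C) (𝟙_ C)).inv
                = (ρ_ A).inv ≫ (ρ_ A).inv ▷ 𝟙_ C := by monoidal_coherence
            rw [reassoc_of% this]
        _ = (ρ_ A).inv ≫ (((ρ_ A).inv ≫ (A ◁ jk) ≫ g) ▷ 𝟙_ C) := by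
            simp only [comp_whiskerRight, Category.assoc]
        _ = (ρ_ A).inv ≫ (A ◁ jk) ≫ g ≫ (ρ_ B).inv := by
            rw [← rightUnitor_inv_naturality]
            simp only [Category.assoc]
    refine ⟨η, ?_⟩
    intro A B f
    set g : A ⊗ J ⟶ B := (hpJ A).desc (BinaryCofan.mk
      ((ρ_ A).hom ≫ f ≫ (B ◁ p₁) ≫ (ρ_ B).hom)
      ((ρ_ A).hom ≫ f ≫ (B ◁ p₂) ≫ (ρ_ B).hom)) with hg
    have hg₁ : (A ◁ j₁) ≫ g = (ρ_ A).hom ≫ f ≫ (B ◁ p₁) ≫ (ρ_ B).hom := by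
      rw [hg]; exact (hpJ A).fac _ ⟨WalkingPair.left⟩
    have hg₂ : (A ◁ j₂) ≫ g = (ρ_ A).hom ≫ f ≫ (B ◁ p₂) ≫ (ρ_ B).hom := by
      rw [hg]; exact (hpJ A).fac _ ⟨WalkingPair.right⟩
    have hg₁' := reassoc_of% hg₁
    have hg₂' := reassoc_of% hg₂
    have hmain : f = (ρ_ A).inv ≫ (A ◁ η) ≫ (α_ A J J).inv ≫ (g ▷ J) := by
      refine extJ A B _ _ ?_ ?_
      · rw [keyA A B g j₁ p₁ ηp₁, hg₁']
        simp
      · rw [keyA A B g j₂ p₂ ηp₂, hg₂']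
        simp
    refine ⟨g, hmain, ?_⟩
    intro g' hg'
    have cancel : ∀ (u v : A ⊗ J ⟶ B),
        (ρ_ A).inv ≫ (A ◁ j₁) ≫ u ≫ (ρ_ B).inv = (ρ_ A).inv ≫ (A ◁ j₁) ≫ v ≫ (ρ_ B).inv →
        (ρ_ A).inv ≫ (A ◁ j₂) ≫ u ≫ (ρ_ B).inv = (ρ_ A).inv ≫ (A ◁ j₂) ≫ v ≫ (ρ_ B).inv →
        u = v := by
      intro u v h1 h2
      refine BinaryCofan.IsColimit.hom_ext (hpJ A) ?_ ?_ <;>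
        simp only [BinaryCofan.mk_inl, BinaryCofan.mk_inr]
      · show A ◁ j₁ ≫ u = A ◁ j₁ ≫ v
        have h3 := congrArg (fun x => (ρ_ A).hom ≫ x ≫ (ρ_ B).hom) h1
        simpa using h3
      · show A ◁ j₂ ≫ u = A ◁ j₂ ≫ v
        have h3 := congrArg (fun x => (ρ_ A).hom ≫ x ≫ (ρ_ B).hom) h2
        simpa using h3
    refine cancel g' g ?_ ?_
    · rw [← keyA A B g' j₁ p₁ ηp₁, ← keyA A B g j₁ p₁ ηp₁, ← hg', ← hmain]
    · rw [← keyA A B g' j₂ p₂ ηp₂, ← keyA A B g j₂ p₂ ηp₂, ← hg', ← hmain]
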